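/- For N ≥ 5, α ∈ ℝ, and γ ∈ ℝ, the function v(x) = x₁|x|^{-α} satisfies Δ²v - γ|x|^{-4} v = (α(N-α)(α+2)(N-α-2) - γ) · x₁ |x|^{-α-4} pointwise on the upper half-space minus the origin. -/

import Mathlib

open scoped Real

/-- The Laplacian of `f : ℝ^N → ℝ` at `x`, defined as the sum of second derivatives
along the coordinate directions. -/
noncomputable def laplacian {N : ℕ} (f : EuclideanSpace ℝ (Fin N) → ℝ)
    (x : EuclideanSpace ℝ (Fin N)) : ℝ :=
  ∑ i : Fin N, iteratedFDeriv ℝ 2 f x ![EuclideanSpace.single i 1, EuclideanSpace.single i 1]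

/-- The bilaplacian `Δ²`. -/
noncomputable def bilaplacian {N : ℕ} (f : EuclideanSpace ℝ (Fin N) → ℝ)
    (x : EuclideanSpace ℝ (Fin N)) : ℝ :=
  laplacian (laplacian f) x

set_option linter.unusedSectionVars false
open scoped Topology

namespace BPM

variable {N : ℕ}

noncomputable def q (y : EuclideanSpace ℝ (Fin N)) : ℝ := ∑ i, y i ^ 2

lemma q_eq_norm (y : EuclideanSpace ℝ (Fin N)) : q y = ‖y‖ ^ 2 := by
  rw [EuclideanSpace.norm_eq, Real.sq_sqrt (by positivity)]
  simp [q, Real.norm_eq_abs, sq_abs]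

lemma q_pos {y : EuclideanSpace ℝ (Fin N)} (hy : y ≠ 0) : 0 < q y := by
  rw [q_eq_norm]
  exact pow_pos (norm_pos_iff.mpr hy) 2

noncomputable def pr (i : Fin N) : EuclideanSpace ℝ (Fin N) →L[ℝ] ℝ := EuclideanSpace.proj i

@[simp] lemma pr_apply (i : Fin N) (y : EuclideanSpace ℝ (Fin N)) : pr i y = y i := rfl

noncomputable def S : EuclideanSpace ℝ (Fin N) →L[ℝ] EuclideanSpace ℝ (Fin N) →L[ℝ] ℝ :=
  ∑ i, (2:ℝ) • (pr i).smulRight (pr i)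

lemma S_apply (y u : EuclideanSpace ℝ (Fin N)) : S y u = ∑ i, 2 * (y i * u i) := by
  simp [S, ContinuousLinearMap.sum_apply, smul_eq_mul, mul_assoc, mul_comm]

lemma S_fst (x : EuclideanSpace ℝ (Fin N)) (j : Fin N) :
    S x (EuclideanSpace.single j 1) = 2 * x j := by
  rw [S_apply]
  rw [Finset.sum_eq_single j]
  · simp
  · intro i _ hij
    simp only [EuclideanSpace.single_apply]
    rw [if_neg hij]; ring
  · simp

lemma S_diag (j : Fin N) :
    S (EuclideanSpace.single j 1) (EuclideanSpace.single j 1) = 2 := by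
  rw [S_fst]; simp

lemma hasFDerivAt_q (x : EuclideanSpace ℝ (Fin N)) : HasFDerivAt q (S x) x := by
  have h : S x = ∑ i, (2 * x i) • pr i := by
    ext u
    simp [S, ContinuousLinearMap.sum_apply, smul_eq_mul, mul_assoc]
  rw [h]
  apply HasFDerivAt.fun_sum
  intro i _
  have := ((pr i).hasFDerivAt (x := x)).mul ((pr i).hasFDerivAt (x := x))
  convert this using 1
  · ext y; simp [sq]
  · ext u; simp [two_mul, mul_comm]; ring
  · ext u; simp [two_mul, mul_comm]; ring

noncomputable def Q (c : ℝ) (y : EuclideanSpace ℝ (Fin N)) : ℝ := q y ^ c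

lemma hasFDerivAt_Q (c : ℝ) {x : EuclideanSpace ℝ (Fin N)} (hx : x ≠ 0) :
    HasFDerivAt (Q c) ((c * Q (c-1) x) • S x) x :=
  (hasFDerivAt_q x).rpow_const (Or.inl (q_pos hx).ne')

variable [NeZero N]

noncomputable def F (c b : ℝ) (y : EuclideanSpace ℝ (Fin N)) : ℝ := c * (y 0 * Q b y)

noncomputable def G (c b : ℝ) (x : EuclideanSpace ℝ (Fin N)) :
    EuclideanSpace ℝ (Fin N) →L[ℝ] ℝ :=
  c • (x 0 • ((b * Q (b-1) x) • S x) + Q b x • pr 0)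

lemma hasFDerivAt_F (c b : ℝ) {x : EuclideanSpace ℝ (Fin N)} (hx : x ≠ 0) :
    HasFDerivAt (F c b) (G c b x) x :=
  (((pr 0).hasFDerivAt.mul (hasFDerivAt_Q b hx)).const_mul c)

lemma second (c b : ℝ) {x : EuclideanSpace ℝ (Fin N)} (hx : x ≠ 0)
    (u : EuclideanSpace ℝ (Fin N)) :
    iteratedFDeriv ℝ 2 (F c b) x ![u, u]
      = c * (x 0 * (b * Q (b-1) x * S u u + b * ((b-1) * Q (b-1-1) x * S x u) * S x u)
          + u 0 * (b * Q (b-1) x * S x u) + b * Q (b-1) x * S x u * u 0) := by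
  have hev : fderiv ℝ (F c b) =ᶠ[𝓝 x] G c b := by
    filter_upwards [isOpen_compl_singleton.mem_nhds hx] with y hy
    exact (hasFDerivAt_F c b hy).fderiv
  have hW := ((hasFDerivAt_Q (b-1) hx).const_mul b).smul
    (S (N := N)).hasFDerivAt
  have hA := ((pr (0 : Fin N)).hasFDerivAt (x := x)).smul hW
  have hB := (hasFDerivAt_Q b hx).smul_const (pr (0 : Fin N))
  have hG : HasFDerivAt (G c b) _ x := (hA.add hB).const_smul c
  rw [iteratedFDeriv_two_apply, hev.fderiv_eq, hG.fderiv]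
  simp only [Matrix.cons_val_zero, Matrix.cons_val_one, Matrix.head_cons,
    ContinuousLinearMap.smul_apply, ContinuousLinearMap.add_apply,
    ContinuousLinearMap.smulRight_apply, pr_apply, smul_eq_mul, Pi.smul_apply']

lemma laplacian_F (c b : ℝ) {x : EuclideanSpace ℝ (Fin N)} (hx : x ≠ 0) :
    laplacian (F c b) x = F (c * (2*b*(2*b+N))) (b-1) x := by
  unfold laplacian
  have h : ∀ j : Fin N,
      iteratedFDeriv ℝ 2 (F c b) x ![EuclideanSpace.single j 1, EuclideanSpace.single j 1]
      = (c * (4*b*(b-1) * (x 0 * Q (b-1-1) x))) * (x j)^2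
        + (c * (4 * b * Q (b-1) x)) * ((if j = (0:Fin N) then (1:ℝ) else 0) * x j)
        + c * (2 * b * (x 0 * Q (b-1) x)) := by
    intro j
    rw [second c b hx, S_diag, S_fst]
    have hs : (EuclideanSpace.single j (1:ℝ)) 0 = if j = (0:Fin N) then (1:ℝ) else 0 := by
      simp [EuclideanSpace.single_apply, eq_comm]
    rw [hs]
    ring
  rw [Finset.sum_congr rfl fun j _ => h j]
  rw [Finset.sum_add_distrib, Finset.sum_add_distrib, ← Finset.mul_sum, ← Finset.mul_sum,
    Finset.sum_const, Finset.card_univ, Fintype.card_fin, nsmul_eq_mul]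
  have h1 : ∑ j, (x j)^2 = q x := rfl
  have h2 : (∑ j : Fin N, (if j = (0:Fin N) then (1:ℝ) else 0) * x j) = x 0 := by
    simp [ite_mul]
  rw [h1, h2]
  have h3 : Q (b-1-1) x * q x = Q (b-1) x := by
    unfold Q
    have h4 := Real.rpow_add (q_pos hx) (b-1-1) 1
    rw [Real.rpow_one] at h4
    rw [← h4]
    norm_num
  unfold F
  linear_combination (c * (4*b*(b-1) * x 0)) * h3

lemma bilaplacian_F (c b : ℝ) {x : EuclideanSpace ℝ (Fin N)} (hx : x ≠ 0) :
    bilaplacian (F c b) x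
      = F (c * (2*b*(2*b+N)) * (2*(b-1)*(2*(b-1)+N))) (b-1-1) x := by
  have hev : laplacian (F c b) =ᶠ[𝓝 x] F (c * (2*b*(2*b+N))) (b-1) := by
    filter_upwards [isOpen_compl_singleton.mem_nhds hx] with y hy
    exact laplacian_F c b hy
  have h2 : iteratedFDeriv ℝ 2 (laplacian (F c b)) x
      = iteratedFDeriv ℝ 2 (F (c * (2*b*(2*b+N))) (b-1)) x := by
    rw [← iteratedFDerivWithin_univ, ← iteratedFDerivWithin_univ]
    exact Filter.EventuallyEq.iteratedFDerivWithin_eq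
      (by rw [nhdsWithin_univ]; exact hev) hev.eq_of_nhds 2
  have : bilaplacian (F c b) x = laplacian (F (c * (2*b*(2*b+N))) (b-1)) x := by
    simp only [bilaplacian, laplacian, h2]
  rw [this, laplacian_F _ _ hx]

lemma Q_eq (c : ℝ) (y : EuclideanSpace ℝ (Fin N)) : Q c y = ‖y‖ ^ (2*c) := by
  unfold Q
  rw [q_eq_norm, ← Real.rpow_natCast ‖y‖ 2, ← Real.rpow_mul (norm_nonneg y)]
  norm_num

end BPM

open BPM

/-- For `N ≥ 5`, `α ∈ ℝ` and `γ ∈ ℝ`, the function `v(x) = x₁|x|^{-α}` satisfies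
`Δ²v - γ|x|^{-4} v = (α(N-α)(α+2)(N-α-2) - γ) x₁ |x|^{-α-4}` pointwise on the
upper half-space minus the origin. -/
theorem bilaplacian_power_model (N : ℕ) (hN : 5 ≤ N) (α γ : ℝ)
    (v : EuclideanSpace ℝ (Fin N) → ℝ)
    (hv : ∀ x : EuclideanSpace ℝ (Fin N), v x = x ⟨0, by omega⟩ * ‖x‖ ^ (-α)) :
    ∀ x : EuclideanSpace ℝ (Fin N), 0 < x ⟨0, by omega⟩ → x ≠ 0 →
      bilaplacian v x - γ / ‖x‖ ^ 4 * v x =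
        (α * ((N : ℝ) - α) * (α + 2) * ((N : ℝ) - α - 2) - γ) * x ⟨0, by omega⟩ * ‖x‖ ^ (-α - 4) := by
  haveI : NeZero N := ⟨by omega⟩
  have hi : (⟨0, by omega⟩ : Fin N) = 0 := by
    ext
    simp
  intro x hx0 hx
  have hnorm : (0:ℝ) < ‖x‖ := norm_pos_iff.mpr hx
  have hveq : v = F 1 (-α/2) := by
    funext y
    rw [hv y, hi]
    unfold F
    rw [Q_eq, show 2*(-α/2) = -α by ring, one_mul]
  have hb : bilaplacian v x
      = (1 * (2*(-α/2)*(2*(-α/2)+N)) * (2*(-α/2-1)*(2*(-α/2-1)+N)))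
        * (x 0 * ‖x‖ ^ (-α-4)) := by
    rw [hveq, bilaplacian_F 1 (-α/2) hx]
    unfold F
    rw [Q_eq, show 2*(-α/2-1-1) = -α-4 by ring]
  rw [hb, hv x, hi]
  have hid : ‖x‖ ^ (-α-4) * ‖x‖ ^ (4:ℕ) = ‖x‖ ^ (-α) := by
    rw [← Real.rpow_natCast ‖x‖ 4, ← Real.rpow_add hnorm]
    norm_num
  rw [← hid]
  have h4 : (‖x‖:ℝ) ^ (4:ℕ) ≠ 0 := pow_ne_zero 4 hnorm.ne'
  field_simp
  ring
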